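/- Let d ∈ ℕ, d ≥ 1, ρ a density matrix on ℂ^d, {P(f)}_{f∈Ω} a PVM on a nonempty finite set Ω, T > 0, and U : ℝ → M_d(ℂ) a differentiable family of unitary matrices with U(0) = 1. Set v(t) := ‖U'(t)‖_op and assume v is integrable on [0,T]. Then for every n ∈ ℕ and all times 0 ≤ t_1 < … < t_n ≤ T, the quantum bi-probability satisfies Σ_{f⁺,f⁻ ∈ Ω^n} |Q_{t_n,…,t_1}(f⁺,f⁻)| ≤ d² · exp(2(d−1) ∫₀^T v(s) ds). In particular, the family of quantum bi-probabilities on [0,T] is uniformly bounded. -/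

import Mathlib

open Matrix
open scoped Matrix.Norms.L2Operator
open scoped ComplexOrder

/-- The Heisenberg-picture projection at time `t`: `P_t(f) = U(t)* P(f) U(t)`. -/
noncomputable def heisenbergProj {d : ℕ} {Ω : Type*}
    (P : Ω → Matrix (Fin d) (Fin d) ℂ) (U : ℝ → Matrix (Fin d) (Fin d) ℂ)
    (t : ℝ) (f : Ω) : Matrix (Fin d) (Fin d) ℂ :=
  (U t)ᴴ * P f * U t

/-- The quantum bi-probability
`Q_{t_n,…,t_1}(f⁺,f⁻) = tr[P_{t_n}(f_n⁺)⋯P_{t_1}(f_1⁺) ρ P_{t_1}(f_1⁻)⋯P_{t_n}(f_n⁻)]`,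
where indices `j : Fin n` are ordered so that `j = 0` corresponds to the earliest time `t_1`. -/
noncomputable def quantumBiProb {d : ℕ} {Ω : Type*}
    (ρ : Matrix (Fin d) (Fin d) ℂ) (P : Ω → Matrix (Fin d) (Fin d) ℂ)
    (U : ℝ → Matrix (Fin d) (Fin d) ℂ) {n : ℕ} (t : Fin n → ℝ)
    (fp fm : Fin n → Ω) : ℂ :=
  Matrix.trace
    ((List.ofFn fun j => heisenbergProj P U (t j) (fp j)).reverse.prod * ρ *
      (List.ofFn fun j => heisenbergProj P U (t j) (fm j)).prod)

namespace QBPaux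

variable {d : ℕ}

noncomputable def q (X : Matrix (Fin d) (Fin d) ℂ) : ℝ := (Matrix.trace (Xᴴ * X)).re

lemma trace_ctm (X Y : Matrix (Fin d) (Fin d) ℂ) :
    Matrix.trace (Xᴴ * Y) = ∑ j, ∑ i, (starRingEnd ℂ) (X i j) * Y i j := by
  simp [Matrix.trace, Matrix.mul_apply, Matrix.diag, Matrix.conjTranspose_apply]

lemma q_eq_sum (X : Matrix (Fin d) (Fin d) ℂ) : q X = ∑ j, ∑ i, ‖X i j‖ ^ 2 := by
  rw [q, trace_ctm]
  simp only [Complex.re_sum]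
  congr 1; ext j; congr 1; ext i
  rw [mul_comm, Complex.mul_conj]
  simp [Complex.normSq_eq_norm_sq, ← Complex.ofReal_pow]

lemma q_nonneg (X : Matrix (Fin d) (Fin d) ℂ) : 0 ≤ q X := by
  rw [q_eq_sum]; positivity

noncomputable def nrm (X : Matrix (Fin d) (Fin d) ℂ) : ℝ := Real.sqrt (q X)

lemma nrm_nonneg (X : Matrix (Fin d) (Fin d) ℂ) : 0 ≤ nrm X := Real.sqrt_nonneg _

lemma nrm_sq (X : Matrix (Fin d) (Fin d) ℂ) : nrm X ^ 2 = q X := Real.sq_sqrt (q_nonneg X)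


lemma q_form {B : Matrix (Fin d) (Fin d) ℂ} (hB : Bᴴ = B) (hBB : B * B = B)
    (X : Matrix (Fin d) (Fin d) ℂ) :
    q (B * X) = (Matrix.trace (Xᴴ * (B * X))).re := by
  unfold q
  rw [Matrix.conjTranspose_mul, hB, Matrix.mul_assoc, ← Matrix.mul_assoc B B X, hBB]

lemma q_sum_form {Ω : Type*} (s : Finset Ω) (B : Ω → Matrix (Fin d) (Fin d) ℂ)
    (hB : ∀ g, (B g)ᴴ = B g) (hBB : ∀ g, B g * B g = B g) (X : Matrix (Fin d) (Fin d) ℂ) :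
    ∑ g ∈ s, q (B g * X) = (Matrix.trace (Xᴴ * ((∑ g ∈ s, B g) * X))).re := by
  rw [Finset.sum_mul, Matrix.mul_sum, Matrix.trace_sum, Complex.re_sum]
  exact Finset.sum_congr rfl fun g _ => q_form (hB g) (hBB g) X

lemma herm_idem_compl {B : Matrix (Fin d) (Fin d) ℂ} (hB : Bᴴ = B) (hBB : B * B = B) :
    (1 - B)ᴴ = 1 - B ∧ (1 - B) * (1 - B) = 1 - B := by
  constructor
  · rw [Matrix.conjTranspose_sub, Matrix.conjTranspose_one, hB]
  · have h : (1 - B) * (1 - B) = 1 - B - B + B * B := by noncomm_ring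
    rw [h, hBB]; abel

lemma q_split {B : Matrix (Fin d) (Fin d) ℂ} (hB : Bᴴ = B) (hBB : B * B = B)
    (X : Matrix (Fin d) (Fin d) ℂ) :
    q (B * X) + q ((1 - B) * X) = q X := by
  obtain ⟨h1, h2⟩ := herm_idem_compl hB hBB
  rw [q_form hB hBB, q_form h1 h2, ← Complex.add_re, ← Matrix.trace_add, ← Matrix.mul_add,
    ← Matrix.add_mul]
  simp [q]

lemma q_proj_le {B : Matrix (Fin d) (Fin d) ℂ} (hB : Bᴴ = B) (hBB : B * B = B)
    (X : Matrix (Fin d) (Fin d) ℂ) : q (B * X) ≤ q X := by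
  have := q_split hB hBB X
  have := q_nonneg ((1 - B) * X)
  linarith

lemma q_unitary_mul {V : Matrix (Fin d) (Fin d) ℂ} (hV : V ∈ Matrix.unitaryGroup (Fin d) ℂ)
    (X : Matrix (Fin d) (Fin d) ℂ) : q (V * X) = q X := by
  have h1 : Vᴴ * V = 1 := by
    simpa [Matrix.star_eq_conjTranspose] using Matrix.mem_unitaryGroup_iff'.mp hV
  unfold q
  rw [Matrix.conjTranspose_mul, Matrix.mul_assoc, ← Matrix.mul_assoc Vᴴ V X, h1, Matrix.one_mul]

lemma q_eq_sum_cols (X : Matrix (Fin d) (Fin d) ℂ) :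
    q X = ∑ j, ‖(EuclideanSpace.equiv (Fin d) ℂ).symm (fun i => X i j)‖ ^ 2 := by
  rw [q_eq_sum]
  refine Finset.sum_congr rfl fun j _ => ?_
  rw [EuclideanSpace.norm_eq, Real.sq_sqrt (by positivity)]
  rfl

lemma nrm_mul_le (A X : Matrix (Fin d) (Fin d) ℂ) : nrm (A * X) ≤ ‖A‖ * nrm X := by
  have h : q (A * X) ≤ ‖A‖ ^ 2 * q X := by
    rw [q_eq_sum_cols, q_eq_sum_cols, Finset.mul_sum]
    refine Finset.sum_le_sum fun j _ => ?_
    have h1 : (fun i => (A * X) i j) = A *ᵥ ((EuclideanSpace.equiv (Fin d) ℂ).symm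
        (fun k => X k j)) := by
      funext i; simp [Matrix.mul_apply, Matrix.mulVec, dotProduct]
    rw [h1]
    calc ‖(EuclideanSpace.equiv (Fin d) ℂ).symm (A *ᵥ ((EuclideanSpace.equiv (Fin d) ℂ).symm
            (fun k => X k j)))‖ ^ 2
        ≤ (‖A‖ * ‖(EuclideanSpace.equiv (Fin d) ℂ).symm (fun k => X k j)‖) ^ 2 := by
          apply pow_le_pow_left₀ (norm_nonneg _) (Matrix.l2_opNorm_mulVec A _)
      _ = ‖A‖ ^ 2 * ‖(EuclideanSpace.equiv (Fin d) ℂ).symm (fun k => X k j)‖ ^ 2 := by ring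
  have := Real.sqrt_le_sqrt h
  calc nrm (A * X) ≤ Real.sqrt (‖A‖ ^ 2 * q X) := this
    _ = ‖A‖ * nrm X := by
        rw [Real.sqrt_mul (sq_nonneg _), Real.sqrt_sq (norm_nonneg _)]; rfl

lemma trace_CS (X Y : Matrix (Fin d) (Fin d) ℂ) :
    ‖Matrix.trace (Xᴴ * Y)‖ ≤ nrm X * nrm Y := by
  rw [trace_ctm]
  set a := fun p : Fin d × Fin d => ‖X p.2 p.1‖ with ha
  set b := fun p : Fin d × Fin d => ‖Y p.2 p.1‖ with hb
  have h1 : ‖∑ j, ∑ i, (starRingEnd ℂ) (X i j) * Y i j‖ ≤ ∑ p : Fin d × Fin d, a p * b p := by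
    rw [Fintype.sum_prod_type]
    refine (norm_sum_le _ _).trans (Finset.sum_le_sum fun j _ =>
      (norm_sum_le _ _).trans (Finset.sum_le_sum fun i _ => ?_))
    rw [norm_mul, RCLike.norm_conj]
  refine h1.trans ?_
  have hX : q X = ∑ p : Fin d × Fin d, a p ^ 2 := by
    rw [q_eq_sum, Fintype.sum_prod_type]
  have hY : q Y = ∑ p : Fin d × Fin d, b p ^ 2 := by
    rw [q_eq_sum, Fintype.sum_prod_type]
  have h3 : (∑ p : Fin d × Fin d, a p * b p) ^ 2 ≤ q X * q Y := by
    rw [hX, hY]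
    exact Finset.sum_mul_sq_le_sq_mul_sq Finset.univ a b
  have h4 : ∑ p : Fin d × Fin d, a p * b p ≤ Real.sqrt (q X * q Y) := by
    rw [← Real.sqrt_sq (by positivity : (0:ℝ) ≤ ∑ p : Fin d × Fin d, a p * b p)]
    exact Real.sqrt_le_sqrt h3
  calc (∑ p : Fin d × Fin d, a p * b p) ≤ Real.sqrt (q X * q Y) := h4
    _ = nrm X * nrm Y := Real.sqrt_mul (q_nonneg X) _


lemma nrm_zero : nrm (0 : Matrix (Fin d) (Fin d) ℂ) = 0 := by
  have : q (0 : Matrix (Fin d) (Fin d) ℂ) = 0 := by unfold q; simp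
  rw [nrm, this, Real.sqrt_zero]

lemma nrm_le_nrm {X Y : Matrix (Fin d) (Fin d) ℂ} (h : q X ≤ q Y) : nrm X ≤ nrm Y :=
  Real.sqrt_le_sqrt h

lemma eq_zero_of_q_eq_zero {X : Matrix (Fin d) (Fin d) ℂ} (h : q X = 0) : X = 0 := by
  rw [q_eq_sum] at h
  ext i j
  have h2 : ∑ i, ‖X i j‖ ^ 2 = 0 :=
    (Finset.sum_eq_zero_iff_of_nonneg (fun _ _ => by positivity)).mp h j (Finset.mem_univ j)
  have h3 : ‖X i j‖ ^ 2 = 0 :=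
    (Finset.sum_eq_zero_iff_of_nonneg (fun _ _ => by positivity)).mp h2 i (Finset.mem_univ i)
  have h4 : ‖X i j‖ = 0 := by
    have := sq_eq_zero_iff.mp h3
    simpa using this
  simpa using norm_eq_zero.mp h4

lemma trace_ge_one {B : Matrix (Fin d) (Fin d) ℂ} (hB : Bᴴ = B) (hBB : B * B = B)
    (hne : B ≠ 0) : 1 ≤ (B.trace).re := by
  have htq : (B.trace).re = q B := by
    unfold q; rw [show Bᴴ * B = B by rw [hB, hBB]]
  have hpos : 0 < q B := by
    rcases (q_nonneg B).lt_or_eq with h | h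
    · exact h
    · exact absurd (eq_zero_of_q_eq_zero h.symm) hne
  have claim1 : ∀ i j, ‖B i j‖ ^ 2 ≤ (∑ k, ‖B i k‖ ^ 2) * (∑ k, ‖B k j‖ ^ 2) := by
    intro i j
    have hBij : ‖B i j‖ ≤ ∑ k, ‖B i k‖ * ‖B k j‖ := by
      conv_lhs => rw [← hBB]
      rw [Matrix.mul_apply]
      exact (norm_sum_le _ _).trans (Finset.sum_le_sum fun k _ => le_of_eq (norm_mul _ _))
    calc ‖B i j‖ ^ 2 ≤ (∑ k, ‖B i k‖ * ‖B k j‖) ^ 2 :=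
          pow_le_pow_left₀ (norm_nonneg _) hBij 2
      _ ≤ (∑ k, ‖B i k‖ ^ 2) * (∑ k, ‖B k j‖ ^ 2) :=
          Finset.sum_mul_sq_le_sq_mul_sq Finset.univ _ _
  have hsq : q B ≤ q B ^ 2 := by
    have hrow : q B = ∑ i, ∑ k, ‖B i k‖ ^ 2 := by rw [q_eq_sum]; exact Finset.sum_comm
    calc q B = ∑ j, ∑ i, ‖B i j‖ ^ 2 := q_eq_sum B
      _ ≤ ∑ j, ∑ i, (∑ k, ‖B i k‖ ^ 2) * (∑ k, ‖B k j‖ ^ 2) :=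
          Finset.sum_le_sum fun j _ => Finset.sum_le_sum fun i _ => claim1 i j
      _ = (∑ i, ∑ k, ‖B i k‖ ^ 2) * (∑ j, ∑ k, ‖B k j‖ ^ 2) := by
          rw [Finset.sum_mul_sum]
          exact Finset.sum_comm
      _ = q B ^ 2 := by rw [← hrow, ← q_eq_sum]; ring
  nlinarith [hpos, hsq]

section Proj

variable {Ω : Type*} [Fintype Ω] [DecidableEq Ω]
variable {P : Ω → Matrix (Fin d) (Fin d) ℂ} {U : ℝ → Matrix (Fin d) (Fin d) ℂ}

lemma card_le_of_ne_zero (hPsa : ∀ f, (P f).IsHermitian) (hPidem : ∀ f, P f * P f = P f)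
    (hPsum : ∑ f, P f = 1) (hd : 1 ≤ d)
    (s : Finset Ω) (hs : ∀ g ∈ s, P g ≠ 0) : (s.card : ℝ) ≤ d := by
  have h1 : ∀ g, 0 ≤ ((P g).trace).re := by
    intro g
    have : ((P g).trace).re = q (P g) := by
      unfold q; rw [show (P g)ᴴ * P g = P g by rw [(hPsa g).eq, hPidem g]]
    rw [this]; exact q_nonneg _
  calc (s.card : ℝ) = ∑ _g ∈ s, (1 : ℝ) := by simp
    _ ≤ ∑ g ∈ s, ((P g).trace).re :=
        Finset.sum_le_sum fun g hg => trace_ge_one (hPsa g).eq (hPidem g) (hs g hg)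
    _ ≤ ∑ g, ((P g).trace).re :=
        Finset.sum_le_sum_of_subset_of_nonneg (Finset.subset_univ s) (fun g _ _ => h1 g)
    _ = ((∑ g, P g).trace).re := by rw [Matrix.trace_sum, Complex.re_sum]
    _ = d := by rw [hPsum, Matrix.trace_one]; simp

lemma conj_mul_conj {V A B : Matrix (Fin d) (Fin d) ℂ} (h2 : V * Vᴴ = 1) :
    (Vᴴ * A * V) * (Vᴴ * B * V) = Vᴴ * (A * B) * V := by
  have h : (Vᴴ * A * V) * (Vᴴ * B * V) = Vᴴ * (A * ((V * Vᴴ) * (B * V))) := by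
    simp only [Matrix.mul_assoc]
  rw [h, h2, Matrix.one_mul]
  simp only [Matrix.mul_assoc]

variable (hPsa : ∀ f, (P f).IsHermitian) (hPidem : ∀ f, P f * P f = P f)
  (hPsum : ∑ f, P f = 1) (hU : ∀ t, U t ∈ Matrix.unitaryGroup (Fin d) ℂ)

section HL
include hU

lemma U_mul_conj (t : ℝ) : U t * (U t)ᴴ = 1 := by
  simpa [Matrix.star_eq_conjTranspose] using Matrix.mem_unitaryGroup_iff.mp (hU t)

lemma conj_mul_U (t : ℝ) : (U t)ᴴ * U t = 1 := by
  simpa [Matrix.star_eq_conjTranspose] using Matrix.mem_unitaryGroup_iff'.mp (hU t)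

lemma H_idem (hPidem : ∀ f, P f * P f = P f) (u : ℝ) (g : Ω) :
    heisenbergProj P U u g * heisenbergProj P U u g = heisenbergProj P U u g := by
  unfold heisenbergProj
  rw [conj_mul_conj (U_mul_conj hU u), hPidem g]

lemma H_sum (hPsum : ∑ f, P f = 1) (u : ℝ) :
    ∑ g, heisenbergProj P U u g = 1 := by
  unfold heisenbergProj
  rw [← Finset.sum_mul, ← Matrix.mul_sum, hPsum, Matrix.mul_one, conj_mul_U hU u]

end HL

lemma H_herm (hPsa : ∀ f, (P f).IsHermitian) (u : ℝ) (g : Ω) :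
    (heisenbergProj P U u g)ᴴ = heisenbergProj P U u g := by
  unfold heisenbergProj
  simp [Matrix.conjTranspose_mul, Matrix.mul_assoc, (hPsa g).eq]

include hPsa hPidem hPsum hU in
lemma step_base (u : ℝ) (X : Matrix (Fin d) (Fin d) ℂ) (hd : 1 ≤ d) :
    ∑ g, nrm (heisenbergProj P U u g * X) ≤ Real.sqrt d * nrm X := by
  classical
  set Z : Finset Ω := Finset.univ.filter (fun g => P g ≠ 0) with hZ
  have hzero : ∀ g, P g = 0 → heisenbergProj P U u g * X = 0 := by
    intro g h; simp [heisenbergProj, h]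
  have hrestrict : ∑ g, nrm (heisenbergProj P U u g * X)
      = ∑ g ∈ Z, nrm (heisenbergProj P U u g * X) := by
    symm
    apply Finset.sum_subset (Finset.subset_univ _)
    intro g _ hg
    have hg0 : P g = 0 := by
      by_contra hc
      exact hg (by simp [hZ, hc])
    rw [hzero g hg0, nrm_zero]
  have hq : ∑ g ∈ Z, q (heisenbergProj P U u g * X) ≤ q X := by
    have h1 : ∑ g ∈ Z, q (heisenbergProj P U u g * X)
        ≤ ∑ g, q (heisenbergProj P U u g * X) :=
      Finset.sum_le_sum_of_subset_of_nonneg (Finset.subset_univ _) (fun _ _ _ => q_nonneg _)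
    have h2 : ∑ g, q (heisenbergProj P U u g * X) = q X := by
      rw [q_sum_form Finset.univ _ (H_herm hPsa u) (H_idem hU hPidem u) X,
        H_sum hU hPsum u, Matrix.one_mul]
      rfl
    linarith
  have hcard : (Z.card : ℝ) ≤ d :=
    card_le_of_ne_zero hPsa hPidem hPsum hd Z (by intro g hg; simpa [hZ] using hg)
  have hCS : (∑ g ∈ Z, nrm (heisenbergProj P U u g * X)) ^ 2
      ≤ (Z.card : ℝ) * ∑ g ∈ Z, q (heisenbergProj P U u g * X) := by
    have := sq_sum_le_card_mul_sum_sq (s := Z) (f := fun g => nrm (heisenbergProj P U u g * X))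
    calc (∑ g ∈ Z, nrm (heisenbergProj P U u g * X)) ^ 2
        ≤ (Z.card : ℝ) * ∑ g ∈ Z, nrm (heisenbergProj P U u g * X) ^ 2 := by exact_mod_cast this
      _ = (Z.card : ℝ) * ∑ g ∈ Z, q (heisenbergProj P U u g * X) := by
          congr 1; exact Finset.sum_congr rfl fun g _ => nrm_sq _
  rw [hrestrict]
  have hnn : 0 ≤ ∑ g ∈ Z, nrm (heisenbergProj P U u g * X) :=
    Finset.sum_nonneg fun g _ => nrm_nonneg _
  have : (∑ g ∈ Z, nrm (heisenbergProj P U u g * X)) ^ 2 ≤ (d : ℝ) * q X := by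
    calc (∑ g ∈ Z, nrm (heisenbergProj P U u g * X)) ^ 2
        ≤ (Z.card : ℝ) * ∑ g ∈ Z, q (heisenbergProj P U u g * X) := hCS
      _ ≤ (d : ℝ) * q X := by
          apply mul_le_mul hcard hq (Finset.sum_nonneg fun _ _ => q_nonneg _) (by positivity)
  calc ∑ g ∈ Z, nrm (heisenbergProj P U u g * X)
      = Real.sqrt ((∑ g ∈ Z, nrm (heisenbergProj P U u g * X)) ^ 2) := (Real.sqrt_sq hnn).symm
    _ ≤ Real.sqrt ((d : ℝ) * q X) := Real.sqrt_le_sqrt this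
    _ = Real.sqrt d * nrm X := by rw [Real.sqrt_mul (by positivity)]; rfl

include hPsa hPidem hPsum hU in
lemma step_ineq (hd : 1 ≤ d) {s u : ℝ} {g : Ω} {X : Matrix (Fin d) (Fin d) ℂ}
    (hX : heisenbergProj P U s g * X = X) :
    ∑ g', nrm (heisenbergProj P U u g' * X)
      ≤ (1 + Real.sqrt ((d : ℝ) - 1) * ‖U u - U s‖) * nrm X := by
  classical
  by_cases hPg : P g = 0
  · have hX0 : X = 0 := by rw [← hX, heisenbergProj, hPg]; simp
    subst hX0
    simp only [Matrix.mul_zero, nrm_zero, mul_zero, Finset.sum_const, smul_zero, le_refl]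
  -- main case
  · set H := heisenbergProj P U u g with hH
    have hHh : Hᴴ = H := H_herm hPsa u g
    have hHi : H * H = H := H_idem hU hPidem u g
    -- the complement bound
    have hWX : P g * (U s * X) = U s * X := by
      conv_rhs => rw [← hX]
      unfold heisenbergProj
      rw [show U s * ((U s)ᴴ * P g * U s * X) = (U s * (U s)ᴴ) * (P g * (U s * X)) by
        simp only [Matrix.mul_assoc], U_mul_conj hU s, Matrix.one_mul]
    have hE : (1 - H) * X = (U u)ᴴ * ((1 - P g) * ((U u - U s) * X)) := by
      have expand : (U u)ᴴ * ((1 - P g) * ((U u - U s) * X))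
          = ((U u)ᴴ * U u) * X - (U u)ᴴ * (P g * (U u * X))
            - ((U u)ᴴ * (U s * X) - (U u)ᴴ * (P g * (U s * X))) := by
        noncomm_ring
      rw [expand, hWX, conj_mul_U hU u, Matrix.one_mul, sub_self, sub_zero, hH]
      unfold heisenbergProj
      simp only [Matrix.sub_mul, Matrix.one_mul, Matrix.mul_assoc]
    have hcompl : nrm ((1 - H) * X) ≤ ‖U u - U s‖ * nrm X := by
      rw [hE]
      have hVunit : (U u)ᴴ ∈ Matrix.unitaryGroup (Fin d) ℂ := by
        simpa [Matrix.star_eq_conjTranspose] using Unitary.star_mem (hU u)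
      have h1 : nrm ((U u)ᴴ * ((1 - P g) * ((U u - U s) * X)))
          = nrm ((1 - P g) * ((U u - U s) * X)) := by
        unfold nrm; rw [q_unitary_mul hVunit]
      rw [h1]
      obtain ⟨hc1, hc2⟩ := herm_idem_compl (hPsa g).eq (hPidem g)
      calc nrm ((1 - P g) * ((U u - U s) * X)) ≤ nrm ((U u - U s) * X) :=
            nrm_le_nrm (q_proj_le hc1 hc2 _)
        _ ≤ ‖U u - U s‖ * nrm X := nrm_mul_le _ _
    -- split the sum
    have hsplit : nrm (H * X) + ∑ g' ∈ Finset.univ.erase g,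
        nrm (heisenbergProj P U u g' * X) = ∑ g', nrm (heisenbergProj P U u g' * X) := by
      rw [hH]
      exact Finset.add_sum_erase Finset.univ
        (fun g' => nrm (heisenbergProj P U u g' * X)) (Finset.mem_univ g)
    rw [← hsplit]
    -- first term
    have hterm1 : nrm (H * X) ≤ nrm X := nrm_le_nrm (q_proj_le hHh hHi X)
    -- second term
    set Z : Finset Ω := (Finset.univ.filter (fun g' => P g' ≠ 0)).erase g with hZdef
    have hrestrict : ∑ g' ∈ Finset.univ.erase g, nrm (heisenbergProj P U u g' * X)
        = ∑ g' ∈ Z, nrm (heisenbergProj P U u g' * X) := by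
      symm
      apply Finset.sum_subset
      · intro g' hg'
        rw [hZdef] at hg'
        exact Finset.mem_erase.mpr ⟨(Finset.mem_erase.mp hg').1, Finset.mem_univ _⟩
      · intro g' hmem hg'
        have hg0 : P g' = 0 := by
          by_contra hc
          refine hg' ?_
          rw [hZdef]
          exact Finset.mem_erase.mpr ⟨(Finset.mem_erase.mp hmem).1,
            Finset.mem_filter.mpr ⟨Finset.mem_univ _, hc⟩⟩
        rw [show heisenbergProj P U u g' * X = 0 by simp [heisenbergProj, hg0], nrm_zero]
    obtain ⟨hc1, hc2⟩ := herm_idem_compl hHh hHi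
    have hqsum : ∑ g' ∈ Finset.univ.erase g, q (heisenbergProj P U u g' * X)
        = q ((1 - H) * X) := by
      rw [q_sum_form (Finset.univ.erase g) _ (H_herm hPsa u) (H_idem hU hPidem u) X]
      have hsum' : ∑ g' ∈ Finset.univ.erase g, heisenbergProj P U u g' = 1 - H := by
        have h5 := Finset.add_sum_erase Finset.univ (fun g' => heisenbergProj P U u g')
          (Finset.mem_univ g)
        rw [H_sum hU hPsum u] at h5
        exact eq_sub_of_add_eq' h5
      rw [hsum', ← q_form hc1 hc2]
    have hZsub : Z ⊆ Finset.univ.erase g := by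
      intro g' hg'
      rw [hZdef] at hg'
      exact Finset.mem_erase.mpr ⟨(Finset.mem_erase.mp hg').1, Finset.mem_univ _⟩
    have hqZ : ∑ g' ∈ Z, q (heisenbergProj P U u g' * X) ≤ q ((1 - H) * X) := by
      rw [← hqsum]
      exact Finset.sum_le_sum_of_subset_of_nonneg hZsub (fun _ _ _ => q_nonneg _)
    have hcard : ((Z.card : ℝ)) ≤ (d : ℝ) - 1 := by
      have hins : (((insert g Z).card : ℝ)) ≤ d := by
        apply card_le_of_ne_zero hPsa hPidem hPsum hd
        intro g' hg'
        rcases Finset.mem_insert.mp hg' with h | h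
        · subst h; exact hPg
        · have h2 : g' ∈ (Finset.univ.filter (fun g'' => P g'' ≠ 0)).erase g := hZdef ▸ h
          exact (Finset.mem_filter.mp (Finset.mem_of_mem_erase h2)).2
      have hgZ : g ∉ Z := by rw [hZdef]; exact Finset.notMem_erase g _
      rw [Finset.card_insert_of_notMem hgZ] at hins
      push_cast at hins; linarith
    have hCS : ∑ g' ∈ Z, nrm (heisenbergProj P U u g' * X)
        ≤ Real.sqrt ((d : ℝ) - 1) * nrm ((1 - H) * X) := by
      have hnn : 0 ≤ ∑ g' ∈ Z, nrm (heisenbergProj P U u g' * X) :=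
        Finset.sum_nonneg fun _ _ => nrm_nonneg _
      have hsq : (∑ g' ∈ Z, nrm (heisenbergProj P U u g' * X)) ^ 2
          ≤ ((d : ℝ) - 1) * q ((1 - H) * X) := by
        calc (∑ g' ∈ Z, nrm (heisenbergProj P U u g' * X)) ^ 2
            ≤ (Z.card : ℝ) * ∑ g' ∈ Z, nrm (heisenbergProj P U u g' * X) ^ 2 := by
              exact_mod_cast sq_sum_le_card_mul_sum_sq
                (s := Z) (f := fun g' => nrm (heisenbergProj P U u g' * X))
          _ = (Z.card : ℝ) * ∑ g' ∈ Z, q (heisenbergProj P U u g' * X) := by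
              congr 1; exact Finset.sum_congr rfl fun g' _ => nrm_sq _
          _ ≤ ((d : ℝ) - 1) * q ((1 - H) * X) := by
              apply mul_le_mul hcard hqZ (Finset.sum_nonneg fun _ _ => q_nonneg _)
              · have h1d : (1 : ℝ) ≤ d := by exact_mod_cast hd
                linarith
      calc ∑ g' ∈ Z, nrm (heisenbergProj P U u g' * X)
          = Real.sqrt ((∑ g' ∈ Z, nrm (heisenbergProj P U u g' * X)) ^ 2) :=
            (Real.sqrt_sq hnn).symm
        _ ≤ Real.sqrt (((d : ℝ) - 1) * q ((1 - H) * X)) := Real.sqrt_le_sqrt hsq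
        _ = Real.sqrt ((d : ℝ) - 1) * nrm ((1 - H) * X) := by
            rw [Real.sqrt_mul (by
              have h1d : (1 : ℝ) ≤ d := by exact_mod_cast hd
              linarith)]
            rfl
    calc nrm (H * X) + ∑ g' ∈ Finset.univ.erase g, nrm (heisenbergProj P U u g' * X)
        ≤ nrm X + Real.sqrt ((d : ℝ) - 1) * (‖U u - U s‖ * nrm X) := by
          rw [hrestrict]
          exact add_le_add hterm1 (hCS.trans
            (mul_le_mul_of_nonneg_left hcompl (Real.sqrt_nonneg _)))
      _ = (1 + Real.sqrt ((d : ℝ) - 1) * ‖U u - U s‖) * nrm X := by ring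

end Proj

section Dyn

open MeasureTheory

variable {U : ℝ → Matrix (Fin d) (Fin d) ℂ} {T : ℝ}

lemma vInt (hUint : MeasureTheory.IntegrableOn (fun s => ‖deriv U s‖) (Set.Icc 0 T))
    {a b : ℝ} (ha : 0 ≤ a) (hb : b ≤ T) (hab : a ≤ b) :
    IntervalIntegrable (fun x => ‖deriv U x‖) MeasureTheory.volume a b :=
  (hUint.mono_set (by rw [Set.uIcc_of_le hab]; exact Set.Icc_subset_Icc ha hb)).intervalIntegrable

lemma norm_U_sub_le (hUdiff : Differentiable ℝ U)
    (hUint : MeasureTheory.IntegrableOn (fun s => ‖deriv U s‖) (Set.Icc 0 T))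
    {s u : ℝ} (h0 : 0 ≤ s) (hsu : s ≤ u) (huT : u ≤ T) :
    ‖U u - U s‖ ≤ ∫ x in s..u, ‖deriv U x‖ := by
  have hmeas : MeasureTheory.AEStronglyMeasurable (deriv U) MeasureTheory.volume :=
    aestronglyMeasurable_deriv U MeasureTheory.volume
  have hvI : MeasureTheory.IntegrableOn (fun x => ‖deriv U x‖) (Set.uIcc s u) :=
    hUint.mono_set (by rw [Set.uIcc_of_le hsu]; exact Set.Icc_subset_Icc h0 huT)
  have hint : IntervalIntegrable (deriv U) MeasureTheory.volume s u := by
    have h2 : MeasureTheory.IntegrableOn (deriv U) (Set.uIcc s u) :=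
      MeasureTheory.Integrable.mono' hvI hmeas.restrict
        (Filter.Eventually.of_forall fun x => le_refl _)
    exact h2.intervalIntegrable
  have hftc : ∫ x in s..u, deriv U x = U u - U s :=
    intervalIntegral.integral_deriv_eq_sub (fun x _ => hUdiff x) hint
  rw [← hftc]
  exact intervalIntegral.norm_integral_le_integral_norm hsu

end Dyn

lemma sum_pi_succ {Ω : Type*} [Fintype Ω] {n : ℕ} {M : Type*} [AddCommMonoid M]
    (F : (Fin (n + 1) → Ω) → M) :
    ∑ f : Fin (n + 1) → Ω, F f = ∑ g : Ω, ∑ f' : Fin n → Ω, F (Fin.cons g f') := by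
  rw [← (Fin.consEquiv (fun _ : Fin (n + 1) => Ω)).sum_comp F, Fintype.sum_prod_type]
  rfl

lemma ofFn_reverse_prod_succ {n : ℕ} (G : Fin (n + 1) → Matrix (Fin d) (Fin d) ℂ) :
    (List.ofFn G).reverse.prod
      = (List.ofFn (fun j : Fin n => G j.succ)).reverse.prod * G 0 := by
  rw [List.ofFn_succ, List.reverse_cons, List.prod_append, List.prod_singleton]

lemma reverse_prod_conj {n : ℕ} (G : Fin n → Matrix (Fin d) (Fin d) ℂ)
    (hG : ∀ j, (G j)ᴴ = G j) :
    ((List.ofFn G).reverse.prod)ᴴ = (List.ofFn G).prod := by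
  have h : conjTranspose ∘ G = G := funext hG
  rw [Matrix.conjTranspose_list_prod, ← List.map_reverse, List.reverse_reverse, List.map_ofFn, h]

section Aux

open MeasureTheory

variable {Ω : Type*} [Fintype Ω] [DecidableEq Ω]
variable {P : Ω → Matrix (Fin d) (Fin d) ℂ} {U : ℝ → Matrix (Fin d) (Fin d) ℂ} {T : ℝ}
variable (hPsa : ∀ f, (P f).IsHermitian) (hPidem : ∀ f, P f * P f = P f)
  (hPsum : ∑ f, P f = 1) (hU : ∀ t, U t ∈ Matrix.unitaryGroup (Fin d) ℂ)
  (hd : 1 ≤ d) (hUdiff : Differentiable ℝ U)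
  (hUint : MeasureTheory.IntegrableOn (fun s => ‖deriv U s‖) (Set.Icc 0 T))

include hPsa hPidem hPsum hU hd hUdiff hUint in
lemma aux_sum :
    ∀ (n : ℕ) (t : Fin n → ℝ) (s₀ : ℝ), 0 ≤ s₀ → s₀ ≤ T →
      (∀ j, s₀ < t j) → (∀ j, t j ≤ T) → StrictMono t →
      ∀ (g : Ω) (X : Matrix (Fin d) (Fin d) ℂ), heisenbergProj P U s₀ g * X = X →
      ∑ f : Fin n → Ω,
          nrm ((List.ofFn fun j => heisenbergProj P U (t j) (f j)).reverse.prod * X)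
        ≤ Real.exp (Real.sqrt ((d : ℝ) - 1) * ∫ x in s₀..T, ‖deriv U x‖) * nrm X := by
  intro n
  induction n with
  | zero =>
    intro t s₀ hs₀ hsT _ _ _ g X _
    have h0 : ∑ f : Fin 0 → Ω,
        nrm ((List.ofFn fun j => heisenbergProj P U (t j) (f j)).reverse.prod * X)
        = nrm X := by
      simp
    rw [h0]
    have harg : 0 ≤ Real.sqrt ((d : ℝ) - 1) * ∫ x in s₀..T, ‖deriv U x‖ :=
      mul_nonneg (Real.sqrt_nonneg _)
        (intervalIntegral.integral_nonneg hsT (fun x _ => norm_nonneg _))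
    have hexp : 1 ≤ Real.exp (Real.sqrt ((d : ℝ) - 1) * ∫ x in s₀..T, ‖deriv U x‖) := by
      have := Real.add_one_le_exp (Real.sqrt ((d : ℝ) - 1) * ∫ x in s₀..T, ‖deriv U x‖)
      linarith
    exact le_mul_of_one_le_left (nrm_nonneg X) hexp
  | succ n ih =>
    intro t s₀ hs₀ hsT hlt hle hmono g X hX
    set κ := Real.sqrt ((d : ℝ) - 1) with hκdef
    have hκ : 0 ≤ κ := Real.sqrt_nonneg _
    have ht0 : 0 ≤ t 0 := le_trans hs₀ (hlt 0).le
    have ht0T : t 0 ≤ T := hle 0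
    have hterm : ∀ (g' : Ω) (f' : Fin n → Ω),
        (List.ofFn fun j => heisenbergProj P U (t j) (Fin.cons (α := fun _ => Ω) g' f' j)).reverse.prod * X
        = (List.ofFn fun j : Fin n =>
            heisenbergProj P U (t j.succ) (f' j)).reverse.prod
            * (heisenbergProj P U (t 0) g' * X) := by
      intro g' f'
      rw [ofFn_reverse_prod_succ, Matrix.mul_assoc]
      simp only [Fin.cons_zero, Fin.cons_succ]
    rw [sum_pi_succ (fun f : Fin (n + 1) → Ω =>
      nrm ((List.ofFn fun j => heisenbergProj P U (t j) (f j)).reverse.prod * X))]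
    have hIH : ∀ g' : Ω,
        ∑ f' : Fin n → Ω, nrm ((List.ofFn fun j : Fin n =>
            heisenbergProj P U (t j.succ) (f' j)).reverse.prod
            * (heisenbergProj P U (t 0) g' * X))
        ≤ Real.exp (κ * ∫ x in (t 0)..T, ‖deriv U x‖)
            * nrm (heisenbergProj P U (t 0) g' * X) := by
      intro g'
      refine ih (fun j => t j.succ) (t 0) ht0 ht0T
        (fun j => hmono (Fin.succ_pos j)) (fun j => hle j.succ)
        (fun a b hab => hmono (Fin.succ_lt_succ_iff.mpr hab)) g'
        (heisenbergProj P U (t 0) g' * X) ?_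
      rw [← Matrix.mul_assoc, H_idem hU hPidem]
    have hI1 : ‖U (t 0) - U s₀‖ ≤ ∫ x in s₀..(t 0), ‖deriv U x‖ :=
      norm_U_sub_le hUdiff hUint hs₀ (hlt 0).le ht0T
    have hadd : (∫ x in s₀..(t 0), ‖deriv U x‖) + (∫ x in (t 0)..T, ‖deriv U x‖)
        = ∫ x in s₀..T, ‖deriv U x‖ :=
      intervalIntegral.integral_add_adjacent_intervals
        (vInt hUint hs₀ ht0T (hlt 0).le) (vInt hUint ht0 le_rfl ht0T)
    calc ∑ g' : Ω, ∑ f' : Fin n → Ω,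
          nrm ((List.ofFn fun j =>
            heisenbergProj P U (t j) (Fin.cons (α := fun _ => Ω) g' f' j)).reverse.prod * X)
        = ∑ g' : Ω, ∑ f' : Fin n → Ω, nrm ((List.ofFn fun j : Fin n =>
            heisenbergProj P U (t j.succ) (f' j)).reverse.prod
            * (heisenbergProj P U (t 0) g' * X)) := by
          refine Finset.sum_congr rfl fun g' _ => Finset.sum_congr rfl fun f' _ => ?_
          rw [hterm g' f']
      _ ≤ ∑ g' : Ω, Real.exp (κ * ∫ x in (t 0)..T, ‖deriv U x‖)
            * nrm (heisenbergProj P U (t 0) g' * X) :=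
          Finset.sum_le_sum fun g' _ => hIH g'
      _ = Real.exp (κ * ∫ x in (t 0)..T, ‖deriv U x‖)
            * ∑ g' : Ω, nrm (heisenbergProj P U (t 0) g' * X) := by
          rw [Finset.mul_sum]
      _ ≤ Real.exp (κ * ∫ x in (t 0)..T, ‖deriv U x‖)
            * ((1 + κ * ‖U (t 0) - U s₀‖) * nrm X) := by
          apply mul_le_mul_of_nonneg_left _ (Real.exp_nonneg _)
          exact step_ineq hPsa hPidem hPsum hU hd hX
      _ ≤ Real.exp (κ * ∫ x in (t 0)..T, ‖deriv U x‖)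
            * (Real.exp (κ * ∫ x in s₀..(t 0), ‖deriv U x‖) * nrm X) := by
          apply mul_le_mul_of_nonneg_left _ (Real.exp_nonneg _)
          apply mul_le_mul_of_nonneg_right _ (nrm_nonneg X)
          have h2 := Real.add_one_le_exp (κ * ∫ x in s₀..(t 0), ‖deriv U x‖)
          nlinarith [mul_le_mul_of_nonneg_left hI1 hκ]
      _ = Real.exp (κ * ∫ x in s₀..T, ‖deriv U x‖) * nrm X := by
          rw [← mul_assoc, ← Real.exp_add, ← hadd]
          ring_nf

end Aux

lemma biprob_trace_eq {Ω : Type*} [Fintype Ω] [DecidableEq Ω]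
    {P : Ω → Matrix (Fin d) (Fin d) ℂ} {U : ℝ → Matrix (Fin d) (Fin d) ℂ}
    (hPsa : ∀ f, (P f).IsHermitian)
    {ρ R : Matrix (Fin d) (Fin d) ℂ} (hRherm : Rᴴ = R) (hRmul : R * R = ρ)
    {n : ℕ} (t : Fin n → ℝ) (fp fm : Fin n → Ω) :
    quantumBiProb ρ P U t fp fm =
      Matrix.trace
        ((((List.ofFn fun j => heisenbergProj P U (t j) (fm j)).reverse.prod) * R)ᴴ *
          (((List.ofFn fun j => heisenbergProj P U (t j) (fp j)).reverse.prod) * R)) := by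
  have key : ∀ Ap Am : Matrix (Fin d) (Fin d) ℂ,
      Matrix.trace ((Am * R)ᴴ * (Ap * R)) = Matrix.trace (Ap * (R * R) * Amᴴ) := by
    intro Ap Am
    rw [Matrix.conjTranspose_mul, hRherm, Matrix.trace_mul_comm]
    congr 1
    simp only [Matrix.mul_assoc]
  rw [key]
  unfold quantumBiProb
  rw [← reverse_prod_conj (fun j => heisenbergProj P U (t j) (fm j))
      (fun j => H_herm hPsa _ _), hRmul]

end QBPaux

open QBPaux

/-- uniform bound for quantum bi-probabilities. If `U` is a differentiable
family of unitaries with `U 0 = 1` whose derivative has integrable operator norm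
`v(t) = ‖U'(t)‖` on `[0,T]` (the L2 operator norm on matrices), then for all
`0 ≤ t_1 < … < t_n ≤ T`,
`Σ_{f⁺,f⁻ ∈ Ω^n} |Q_{t_n,…,t_1}(f⁺,f⁻)| ≤ d² exp(2(d−1) ∫₀^T v(s) ds)`. -/
theorem quantumBiProb_uniform_bound {d : ℕ} (hd : 1 ≤ d)
    {Ω : Type*} [Fintype Ω] [Nonempty Ω] [DecidableEq Ω]
    (ρ : Matrix (Fin d) (Fin d) ℂ) (hρ : ρ.PosSemidef) (hρtr : ρ.trace = 1)
    (P : Ω → Matrix (Fin d) (Fin d) ℂ)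
    (hPsa : ∀ f, (P f).IsHermitian) (hPidem : ∀ f, P f * P f = P f)
    (hPorth : ∀ f f', f ≠ f' → P f * P f' = 0) (hPsum : ∑ f, P f = 1)
    (U : ℝ → Matrix (Fin d) (Fin d) ℂ)
    (hU : ∀ t, U t ∈ Matrix.unitaryGroup (Fin d) ℂ)
    (hU0 : U 0 = 1) (hUdiff : Differentiable ℝ U)
    {T : ℝ} (hT : 0 < T)
    (hUint : MeasureTheory.IntegrableOn (fun s => ‖deriv U s‖) (Set.Icc 0 T))
    (n : ℕ) (t : Fin n → ℝ) (ht : StrictMono t) (htI : ∀ j, t j ∈ Set.Icc 0 T) :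
    ∑ fp : Fin n → Ω, ∑ fm : Fin n → Ω, ‖quantumBiProb ρ P U t fp fm‖
      ≤ (d : ℝ) ^ 2 * Real.exp (2 * ((d : ℝ) - 1) * ∫ s in (0:ℝ)..T, ‖deriv U s‖) := by
  classical
  have hdR : (1 : ℝ) ≤ (d : ℝ) := by exact_mod_cast hd
  set I := ∫ s in (0:ℝ)..T, ‖deriv U s‖ with hIdef
  have hI0 : 0 ≤ I :=
    intervalIntegral.integral_nonneg hT.le (fun x _ => norm_nonneg _)
  set κ := Real.sqrt ((d : ℝ) - 1) with hκdef
  have hκ0 : 0 ≤ κ := Real.sqrt_nonneg _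
  have hκle : κ ≤ (d : ℝ) - 1 := by
    have hx : (0 : ℝ) ≤ (d : ℝ) - 1 := by linarith
    have h2 : ((d : ℝ) - 1) ≤ ((d : ℝ) - 1) ^ 2 := by
      rcases Nat.lt_or_ge d 2 with h | h
      · have hd1 : d = 1 := le_antisymm (Nat.lt_succ_iff.mp h) hd
        subst hd1; norm_num
      · have h2d : (2 : ℝ) ≤ (d : ℝ) := by exact_mod_cast h
        nlinarith
    calc κ ≤ Real.sqrt (((d : ℝ) - 1) ^ 2) := Real.sqrt_le_sqrt h2
      _ = (d : ℝ) - 1 := Real.sqrt_sq hx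
  open scoped MatrixOrder in
  set R := (CFC.sqrt ρ : Matrix (Fin d) (Fin d) ℂ) with hRdef
  have hRherm : Rᴴ = R := by
    open scoped MatrixOrder in
    exact (Matrix.nonneg_iff_posSemidef.mp (CFC.sqrt_nonneg ρ)).1
  have hRmul : R * R = ρ := by
    open scoped MatrixOrder in
    exact CFC.sqrt_mul_sqrt_self ρ (Matrix.nonneg_iff_posSemidef.mpr hρ)
  have hnrmR : nrm R = 1 := by
    have hq1 : q R = 1 := by
      unfold q
      rw [hRherm, hRmul, hρtr]
      simp
    rw [nrm, hq1, Real.sqrt_one]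
  -- the key single-tuple sum bound
  have hS : ∑ f : Fin n → Ω,
      nrm ((List.ofFn fun j => heisenbergProj P U (t j) (f j)).reverse.prod * R)
      ≤ Real.sqrt d * Real.exp (κ * I) := by
    have hsqrtd : 1 ≤ Real.sqrt d := by
      rw [show (1 : ℝ) = Real.sqrt 1 by simp]
      exact Real.sqrt_le_sqrt hdR
    have hexp1 : 1 ≤ Real.exp (κ * I) := by
      have := Real.add_one_le_exp (κ * I)
      nlinarith
    cases n with
    | zero =>
      have h0 : ∑ f : Fin 0 → Ω,
          nrm ((List.ofFn fun j => heisenbergProj P U (t j) (f j)).reverse.prod * R)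
          = 1 := by simp [hnrmR]
      rw [h0]
      nlinarith
    | succ m =>
      have ht0 : 0 ≤ t 0 := (htI 0).1
      have ht0T : t 0 ≤ T := (htI 0).2
      have hterm : ∀ (g' : Ω) (f' : Fin m → Ω),
          (List.ofFn fun j =>
            heisenbergProj P U (t j) (Fin.cons (α := fun _ => Ω) g' f' j)).reverse.prod * R
          = (List.ofFn fun j : Fin m =>
              heisenbergProj P U (t j.succ) (f' j)).reverse.prod
              * (heisenbergProj P U (t 0) g' * R) := by
        intro g' f'
        rw [ofFn_reverse_prod_succ, Matrix.mul_assoc]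
        simp only [Fin.cons_zero, Fin.cons_succ]
      rw [sum_pi_succ (fun f : Fin (m + 1) → Ω =>
        nrm ((List.ofFn fun j => heisenbergProj P U (t j) (f j)).reverse.prod * R))]
      have hsplitI : (∫ x in (0:ℝ)..(t 0), ‖deriv U x‖) + (∫ x in (t 0)..T, ‖deriv U x‖)
          = I :=
        intervalIntegral.integral_add_adjacent_intervals
          (vInt hUint le_rfl ht0T ht0) (vInt hUint ht0 le_rfl ht0T)
      have hIle : (∫ x in (t 0)..T, ‖deriv U x‖) ≤ I := by
        have h1 : 0 ≤ ∫ x in (0:ℝ)..(t 0), ‖deriv U x‖ :=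
          intervalIntegral.integral_nonneg ht0 (fun x _ => norm_nonneg _)
        linarith
      calc ∑ g' : Ω, ∑ f' : Fin m → Ω,
            nrm ((List.ofFn fun j =>
              heisenbergProj P U (t j) (Fin.cons (α := fun _ => Ω) g' f' j)).reverse.prod * R)
          = ∑ g' : Ω, ∑ f' : Fin m → Ω, nrm ((List.ofFn fun j : Fin m =>
              heisenbergProj P U (t j.succ) (f' j)).reverse.prod
              * (heisenbergProj P U (t 0) g' * R)) := by
            refine Finset.sum_congr rfl fun g' _ => Finset.sum_congr rfl fun f' _ => ?_
            rw [hterm g' f']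
        _ ≤ ∑ g' : Ω, Real.exp (κ * ∫ x in (t 0)..T, ‖deriv U x‖)
              * nrm (heisenbergProj P U (t 0) g' * R) := by
            refine Finset.sum_le_sum fun g' _ => ?_
            refine aux_sum hPsa hPidem hPsum hU hd hUdiff hUint m
              (fun j => t j.succ) (t 0) ht0 ht0T
              (fun j => ht (Fin.succ_pos j)) (fun j => (htI j.succ).2)
              (fun a b hab => ht (Fin.succ_lt_succ_iff.mpr hab)) g'
              (heisenbergProj P U (t 0) g' * R) ?_
            rw [← Matrix.mul_assoc, H_idem hU hPidem]
        _ = Real.exp (κ * ∫ x in (t 0)..T, ‖deriv U x‖)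
              * ∑ g' : Ω, nrm (heisenbergProj P U (t 0) g' * R) := by
            rw [Finset.mul_sum]
        _ ≤ Real.exp (κ * ∫ x in (t 0)..T, ‖deriv U x‖) * (Real.sqrt d * nrm R) := by
            apply mul_le_mul_of_nonneg_left _ (Real.exp_nonneg _)
            exact step_base hPsa hPidem hPsum hU (t 0) R hd
        _ ≤ Real.sqrt d * Real.exp (κ * I) := by
            rw [hnrmR, mul_one, mul_comm]
            apply mul_le_mul_of_nonneg_left _ (Real.sqrt_nonneg _)
            exact Real.exp_le_exp.mpr (mul_le_mul_of_nonneg_left hIle hκ0)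
  -- combine
  have hQb : ∀ fp fm : Fin n → Ω, ‖quantumBiProb ρ P U t fp fm‖
      ≤ nrm ((List.ofFn fun j => heisenbergProj P U (t j) (fm j)).reverse.prod * R)
        * nrm ((List.ofFn fun j => heisenbergProj P U (t j) (fp j)).reverse.prod * R) := by
    intro fp fm
    rw [biprob_trace_eq hPsa hRherm hRmul t fp fm]
    exact trace_CS _ _
  have hSnn : 0 ≤ ∑ f : Fin n → Ω,
      nrm ((List.ofFn fun j => heisenbergProj P U (t j) (f j)).reverse.prod * R) :=
    Finset.sum_nonneg fun _ _ => nrm_nonneg _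
  calc ∑ fp : Fin n → Ω, ∑ fm : Fin n → Ω, ‖quantumBiProb ρ P U t fp fm‖
      ≤ ∑ fp : Fin n → Ω, ∑ fm : Fin n → Ω,
          nrm ((List.ofFn fun j => heisenbergProj P U (t j) (fm j)).reverse.prod * R)
            * nrm ((List.ofFn fun j => heisenbergProj P U (t j) (fp j)).reverse.prod * R) :=
        Finset.sum_le_sum fun fp _ => Finset.sum_le_sum fun fm _ => hQb fp fm
    _ = (∑ f : Fin n → Ω,
          nrm ((List.ofFn fun j => heisenbergProj P U (t j) (f j)).reverse.prod * R))
        * (∑ f : Fin n → Ω,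
          nrm ((List.ofFn fun j => heisenbergProj P U (t j) (f j)).reverse.prod * R)) := by
        simp_rw [← Finset.sum_mul]
        rw [← Finset.mul_sum]
    _ ≤ (Real.sqrt d * Real.exp (κ * I)) * (Real.sqrt d * Real.exp (κ * I)) :=
        mul_le_mul hS hS hSnn (by positivity)
    _ = (d : ℝ) * Real.exp (κ * I + κ * I) := by
        rw [Real.exp_add]
        rw [show (Real.sqrt d * Real.exp (κ * I)) * (Real.sqrt d * Real.exp (κ * I))
          = (Real.sqrt d * Real.sqrt d) * (Real.exp (κ * I) * Real.exp (κ * I)) by ring]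
        rw [Real.mul_self_sqrt (by positivity)]
    _ ≤ (d : ℝ) ^ 2 * Real.exp (2 * ((d : ℝ) - 1) * I) := by
        apply mul_le_mul
        · nlinarith
        · apply Real.exp_le_exp.mpr
          nlinarith
        · positivity
        · positivity
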